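/- Let G be a group generated by a subset S, and let S^G denote the union of conjugacy classes of elements of S. Then every element of S^G can be written as a left-associated quandle product s * s_1^{ε_1} * ... * s_k^{ε_k} of elements of S under the conjugation operation x * y = y x y^{-1} (with inverses x *^{-1} y = y^{-1} x y). In other words, the Dehn quandle D(S^G) is generated as a quandle by S. -/
import Mathlib


/-- The set of all conjugates of elements of `S` in `G`. -/
def conjSet (G : Type*) [Group G] (S : Set G) : Set G :=
  {x | ∃ s ∈ S, ∃ g : G, x = g * s * g⁻¹}

theorem conjSet.conj_mem {G : Type*} [Group G] {S : Set G} {x : G}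
    (hx : x ∈ conjSet G S) (g : G) : g * x * g⁻¹ ∈ conjSet G S := by
  obtain ⟨s, hs, h, rfl⟩ := hx
  exact ⟨s, hs, g * h, by group⟩

/-- The Dehn quandle operation `x * y = y x y⁻¹` on the set of conjugates of `S`. -/
def dehnOp {G : Type*} [Group G] {S : Set G} (x y : conjSet G S) : conjSet G S :=
  ⟨(y : G) * (x : G) * (y : G)⁻¹, conjSet.conj_mem x.2 (y : G)⟩

/-- If `G` is generated by `S`, then the Dehn quandle `D(S^G)` is generated as a quandle
by `S`: every subset containing `S` and closed under the quandle operation and its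
inverse contains all of `conjSet G S`. -/
theorem dehn_quandle_generated_by (G : Type*) [Group G] (S : Set G)
    (hS : Subgroup.closure S = ⊤) :
    ∀ T : Set G, S ⊆ T →
      (∀ x ∈ T, ∀ y ∈ T, y * x * y⁻¹ ∈ T ∧ y⁻¹ * x * y ∈ T) →
      conjSet G S ⊆ T := by
  intro T hST hT x hx
  obtain ⟨s, hs, g, rfl⟩ := hx
  have key : ∀ g : G, ∀ x ∈ T, g * x * g⁻¹ ∈ T ∧ g⁻¹ * x * g ∈ T := by
    intro g
    have hg : g ∈ Subgroup.closure S := hS ▸ Subgroup.mem_top g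
    induction hg using Subgroup.closure_induction with
    | mem y hy =>
      intro x hx
      exact hT x hx y (hST hy)
    | one => intro x hx; simpa using hx
    | mul a b _ _ ha hb =>
      intro x hx
      constructor
      · have := (ha _ (hb x hx).1).1
        simpa [mul_assoc] using this
      · have := (hb _ (ha x hx).2).2
        simpa [mul_assoc] using this
    | inv a _ ha =>
      intro x hx
      exact ⟨by simpa using (ha x hx).2, by simpa using (ha x hx).1⟩
  exact (key g (s) (hST hs)).1
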